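/- Let 0 < α < 1 and μ = 5/(1-α) > 4. If f is a continuous function on [0, Y) with f(0)=f'(0)=f''(0)=f'''(0)=f⁽⁴⁾(0)=0 satisfying the integral equation f(y) = ∫₀^y ∫₀^{s₄} ∫₀^{s₃} ∫₀^{s₂} ∫₀^{s₁} |f(r)|^{α-1} f(r) dr ds₁ ds₂ ds₃ ds₄, then the function φ(y) = f(y)/y^μ is uniformly bounded on (0, Y). -/

import Mathlib

open Set intervalIntegral


lemma aux_abs {α : ℝ} (hα0 : 0 < α) (t : ℝ) : |(|t| ^ (α - 1) * t)| = |t| ^ α := by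
  rcases eq_or_ne t 0 with h | h
  · simp [h, Real.zero_rpow hα0.ne']
  · rw [abs_mul, abs_of_nonneg (Real.rpow_nonneg (abs_nonneg t) _),
      ← Real.rpow_add_one (abs_ne_zero.2 h)]
    ring_nf

lemma aux_cont {α : ℝ} (hα0 : 0 < α) : Continuous (fun t : ℝ => |t| ^ (α - 1) * t) := by
  rw [continuous_iff_continuousAt]
  intro t
  rcases eq_or_ne t 0 with h | h
  · subst h
    have h1 : Filter.Tendsto (fun t : ℝ => |t| ^ α) (nhds 0) (nhds 0) := by
      have := (Real.continuousAt_rpow_const 0 α (Or.inr hα0.le)).tendsto.comp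
        (continuous_abs.tendsto' 0 0 abs_zero)
      simpa [Function.comp_def, Real.zero_rpow hα0.ne'] using this
    have : Filter.Tendsto (fun t : ℝ => |t| ^ (α - 1) * t) (nhds 0) (nhds 0) := by
      apply squeeze_zero_norm (fun t => ?_) h1
      rw [Real.norm_eq_abs, aux_abs hα0]
    simpa [ContinuousAt] using this
  · exact ((continuous_abs.continuousAt).rpow_const
      (Or.inl (abs_ne_zero.2 h))).mul continuousAt_id

lemma step_lem {u : ℝ → ℝ} {a K β : ℝ} (ha : 0 ≤ a) (hK : 0 ≤ K) (hβ : 0 ≤ β)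
    (hu : ContinuousOn u (Icc 0 a)) (hb : ∀ r ∈ Icc 0 a, |u r| ≤ K * r ^ β) :
    ContinuousOn (fun y => ∫ r in (0:ℝ)..y, u r) (Icc 0 a) ∧
      ∀ y ∈ Icc 0 a, |∫ r in (0:ℝ)..y, u r| ≤ K / (β + 1) * y ^ (β + 1) := by
  have hicc : uIcc (0:ℝ) a = Icc 0 a := uIcc_of_le ha
  constructor
  · rw [← hicc]
    exact intervalIntegral.continuousOn_primitive_interval
      (by rw [hicc]; exact hu.integrableOn_Icc)
  · intro y hy
    have hsub : Icc (0:ℝ) y ⊆ Icc 0 a := Icc_subset_Icc le_rfl hy.2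
    have hyicc : uIcc (0:ℝ) y = Icc 0 y := uIcc_of_le hy.1
    have hint1 : IntervalIntegrable (fun r => |u r|) MeasureTheory.volume 0 y := by
      apply ContinuousOn.intervalIntegrable
      rw [hyicc]; exact (hu.mono hsub).abs
    have hint2 : IntervalIntegrable (fun r => K * r ^ β) MeasureTheory.volume 0 y := by
      apply ContinuousOn.intervalIntegrable
      rw [hyicc]
      exact continuousOn_const.mul (continuousOn_id.rpow_const fun x _ => Or.inr hβ)
    calc |∫ r in (0:ℝ)..y, u r| ≤ ∫ r in (0:ℝ)..y, |u r| :=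
          intervalIntegral.abs_integral_le_integral_abs hy.1
      _ ≤ ∫ r in (0:ℝ)..y, K * r ^ β :=
          intervalIntegral.integral_mono_on hy.1 hint1 hint2 fun x hx => hb x (hsub hx)
      _ = K / (β + 1) * y ^ (β + 1) := by
          rw [intervalIntegral.integral_const_mul,
            integral_rpow (Or.inl (by linarith : (-1:ℝ) < β)),
            Real.zero_rpow (by linarith : β + 1 ≠ 0)]
          ring

lemma quint_lem {u : ℝ → ℝ} {a K β : ℝ} (ha : 0 ≤ a) (hK : 0 ≤ K) (hβ : 0 ≤ β)
    (hu : ContinuousOn u (Icc 0 a)) (hb : ∀ r ∈ Icc 0 a, |u r| ≤ K * r ^ β) :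
    ∀ y ∈ Icc 0 a, |∫ s₄ in (0:ℝ)..y, ∫ s₃ in (0:ℝ)..s₄, ∫ s₂ in (0:ℝ)..s₃,
        ∫ s₁ in (0:ℝ)..s₂, ∫ r in (0:ℝ)..s₁, u r| ≤ K / 120 * y ^ (β + 5) := by
  obtain ⟨c1, b1⟩ := step_lem ha hK hβ hu hb
  obtain ⟨c2, b2⟩ := step_lem ha (by positivity) (by linarith) c1 b1
  obtain ⟨c3, b3⟩ := step_lem ha (by positivity) (by linarith) c2 b2
  obtain ⟨c4, b4⟩ := step_lem ha (by positivity) (by linarith) c3 b3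
  obtain ⟨c5, b5⟩ := step_lem ha (by positivity) (by linarith) c4 b4
  intro y hy
  refine (b5 y hy).trans ?_
  have h120 : (120:ℝ) ≤ (β+1)*(β+2)*(β+3)*(β+4)*(β+5) := by
    calc (120:ℝ) = 1*2*3*4*5 := by norm_num
      _ ≤ (β+1)*(β+2)*(β+3)*(β+4)*(β+5) := by gcongr <;> linarith
  have hconst : K / (β+1) / (β+1+1) / (β+1+1+1) / (β+1+1+1+1) / (β+1+1+1+1+1)
      ≤ K / 120 := by
    calc K / (β+1) / (β+1+1) / (β+1+1+1) / (β+1+1+1+1) / (β+1+1+1+1+1)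
        = K / ((β+1)*(β+2)*(β+3)*(β+4)*(β+5)) := by
          rw [div_div, div_div, div_div, div_div]; ring_nf
      _ ≤ K / 120 := div_le_div_of_nonneg_left hK (by norm_num) h120
  calc K / (β+1) / (β+1+1) / (β+1+1+1) / (β+1+1+1+1) / (β+1+1+1+1+1)
        * y ^ (β + 1 + 1 + 1 + 1 + 1)
      ≤ K / 120 * y ^ (β + 1 + 1 + 1 + 1 + 1) :=
        mul_le_mul_of_nonneg_right hconst (Real.rpow_nonneg hy.1 _)
    _ = K / 120 * y ^ (β + 5) := by rw [show β+1+1+1+1+1 = β+5 from by ring]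


/-- Maximal regularity: for `0 < α < 1`, `μ = 5/(1-α) > 4`, if a continuous
`f` on `[0,Y)` has vanishing data at `0` and satisfies the quintuple
integral equation corresponding to `f⁽⁵⁾ = |f|^{α-1} f`, then
`φ(y) = f(y)/y^μ` is uniformly bounded on `(0,Y)`. -/
theorem stmt3 (α μ Y : ℝ) (f : ℝ → ℝ)
    (hα : α ∈ Ioo (0 : ℝ) 1) (hμ : μ = 5 / (1 - α)) (hμ4 : 4 < μ) (hY : 0 < Y)
    (hcont : ContinuousOn f (Ico 0 Y))
    (hdata : ∀ j ≤ 4, iteratedDeriv j f 0 = 0)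
    (hint : ∀ y ∈ Ico (0 : ℝ) Y,
      f y = ∫ s₄ in (0 : ℝ)..y, ∫ s₃ in (0 : ℝ)..s₄, ∫ s₂ in (0 : ℝ)..s₃,
        ∫ s₁ in (0 : ℝ)..s₂, ∫ r in (0 : ℝ)..s₁, |f r| ^ (α - 1) * f r) :
    ∃ C : ℝ, ∀ y ∈ Ioo (0 : ℝ) Y, |f y / y ^ μ| ≤ C := by
  obtain ⟨hα0, hα1⟩ := hα
  have h1α : 0 < 1 - α := by linarith
  set L : ℝ := -Real.log 120 / (1 - α) with hLdef
  have hL : L * (1 - α) = -Real.log 120 := by rw [hLdef]; field_simp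
  have hμ5 : μ * (1 - α) = 5 := by rw [hμ]; field_simp
  refine ⟨Real.exp L, fun y hy => ?_⟩
  obtain ⟨hy0, hyY⟩ := hy
  set a : ℝ := (y + Y) / 2 with hadef
  have hya : y ≤ a := by simp only [hadef]; linarith
  have haY : a < Y := by simp only [hadef]; linarith
  have ha0 : 0 ≤ a := by linarith
  have hsub : Icc 0 a ⊆ Ico 0 Y := fun x hx => ⟨hx.1, lt_of_le_of_lt hx.2 haY⟩
  have hfc : ContinuousOn f (Icc 0 a) := hcont.mono hsub
  obtain ⟨M, hM⟩ := isCompact_Icc.exists_bound_of_continuousOn hfc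
  set K0 : ℝ := max M 1 with hK0def
  have hK0 : 0 < K0 := lt_of_lt_of_le one_pos (le_max_right _ _)
  set D : ℝ := Real.log K0 - L with hDdef
  set Kn : ℕ → ℝ := fun n => Real.exp (L + α ^ n * D) with hKn
  set βn : ℕ → ℝ := fun n => μ * (1 - α ^ n) with hβn
  have hβnn : ∀ n, 0 ≤ βn n := fun n =>
    mul_nonneg (by linarith) (by
      have : α ^ n ≤ 1 := pow_le_one₀ hα0.le hα1.le
      linarith)
  have hgc : ContinuousOn (fun r => |f r| ^ (α - 1) * f r) (Icc 0 a) :=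
    (aux_cont hα0).comp_continuousOn hfc
  have key : ∀ n : ℕ, ∀ r ∈ Icc 0 a, |f r| ≤ Kn n * r ^ βn n := by
    intro n
    induction n with
    | zero =>
        intro r hr
        have : Kn 0 = K0 := by
          simp only [hKn, pow_zero, one_mul, hDdef]
          rw [show L + (Real.log K0 - L) = Real.log K0 from by ring, Real.exp_log hK0]
        rw [this]
        simp only [hβn, pow_zero, sub_self, mul_zero, Real.rpow_zero, mul_one]
        exact (hM r hr).trans (le_max_left _ _)
    | succ n ih =>
        have hg : ∀ r ∈ Icc 0 a, |(|f r| ^ (α - 1) * f r)| ≤ Kn n ^ α * r ^ (α * βn n) := by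
          intro r hr
          rw [aux_abs hα0]
          calc |f r| ^ α ≤ (Kn n * r ^ βn n) ^ α :=
                Real.rpow_le_rpow (abs_nonneg _) (ih r hr) hα0.le
            _ = Kn n ^ α * r ^ (α * βn n) := by
                rw [Real.mul_rpow (Real.exp_pos _).le (Real.rpow_nonneg hr.1 _),
                  ← Real.rpow_mul hr.1, mul_comm (βn n) α]
        intro r hr
        have h2 := quint_lem ha0 (Real.rpow_nonneg (Real.exp_pos _).le α)
          (mul_nonneg hα0.le (hβnn n)) hgc hg r hr
        rw [← hint r (hsub hr)] at h2
        refine h2.trans (le_of_eq ?_)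
        have hexp : α * βn n + 5 = βn (n + 1) := by
          simp only [hβn]
          linear_combination -hμ5
        have hcst : Kn n ^ α / 120 = Kn (n + 1) := by
          simp only [hKn]
          rw [← Real.exp_mul, show (120:ℝ) = Real.exp (Real.log 120) from
            (Real.exp_log (by norm_num)).symm, ← Real.exp_sub]
          congr 1
          linear_combination -hL
        rw [hexp, hcst]
  -- pass to the limit
  have hymem : y ∈ Icc 0 a := ⟨hy0.le, hya⟩
  have hbound : ∀ n : ℕ, |f y / y ^ μ| ≤ Real.exp (L + α ^ n * (D - μ * Real.log y)) := by
    intro n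
    have h1 := key n y hymem
    have hyμ : (0:ℝ) < y ^ μ := Real.rpow_pos_of_pos hy0 μ
    rw [abs_div, abs_of_pos hyμ, div_le_iff₀ hyμ]
    refine h1.trans (le_of_eq ?_)
    rw [Real.rpow_def_of_pos hy0 (βn n), Real.rpow_def_of_pos hy0 μ, hKn]
    simp only [← Real.exp_add]
    congr 1
    simp only [hβn]
    ring
  have htend : Filter.Tendsto (fun n : ℕ => Real.exp (L + α ^ n * (D - μ * Real.log y)))
      Filter.atTop (nhds (Real.exp L)) := by
    have h0 : Filter.Tendsto (fun n : ℕ => (α : ℝ) ^ n) Filter.atTop (nhds 0) :=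
      tendsto_pow_atTop_nhds_zero_of_lt_one hα0.le hα1
    have := Real.continuous_exp.continuousAt.tendsto.comp
      ((tendsto_const_nhds (x := L)).add (h0.mul_const (D - μ * Real.log y)))
    simpa [Function.comp_def] using this
  exact ge_of_tendsto' htend hbound
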